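/- Let E be a directed graph, K a field, A = L_K(E) or C_K(E), and let c = e_1⋯e_n be a closed path based at the vertex u (s(c) = r(c) = u). Consider the linear map T_c : uAu → uAu given by T_c(x) = c* x c. If ω is a fixed point of T_c having degree zero, then ω ∈ Ku. Consequently, if z is a degree-zero central element of A with Peirce decomposition z = Σ_{v ∈ E^0} z_v and there exists a closed path based at u, then z_u ∈ Ku. -/

import Mathlib

/-! Basic infrastructure: directed graphs and their path algebras.

The path algebra `KE` is realized as the non-unital subalgebra generated by the
(images of the) vertices and edges inside the unital algebra `PA K E`, which is the
quotient of the free algebra on vertices and edges by the usual path-algebra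
relations (vertices are orthogonal idempotents acting as local units on edges).
Words of composable edges are exactly the paths, so `KE` has the paths as a basis. -/

/-- A directed graph `E = (E⁰, E¹, s, r)`. -/
structure DirGraph : Type 1 where
  V : Type
  Edge : Type
  s : Edge → V
  r : Edge → V

/-- A (non-unital, possibly non-closed) subset `S` of an algebra is *prime* if it is nonzero
and `a S b = 0` implies `a = 0` or `b = 0` for `a, b ∈ S`. -/
def IsPrimeSet {A : Type} [NonUnitalNonAssocSemiring A] (S : Set A) : Prop :=
  (∃ a ∈ S, a ≠ 0) ∧ ∀ a ∈ S, ∀ b ∈ S, (∀ x ∈ S, a * x * b = 0) → a = 0 ∨ b = 0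

/-- `J` is a two-sided ideal of the (possibly non-unital) subalgebra with carrier `S`. -/
def IsIdealOf (K : Type) [Field K] {A : Type} [Ring A] [Algebra K A] (S J : Set A) : Prop :=
  J ⊆ S ∧ (0 : A) ∈ J ∧ (∀ x ∈ J, ∀ y ∈ J, x + y ∈ J) ∧
    (∀ k : K, ∀ x ∈ J, k • x ∈ J) ∧ (∀ a ∈ S, ∀ x ∈ J, a * x ∈ J ∧ x * a ∈ J)

namespace DirGraph

/-- Generators of the path algebra: vertices and edges. -/
abbrev Gen (E : DirGraph) : Type := E.V ⊕ E.Edge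

variable (K : Type) [Field K] (E : DirGraph)

/-- The defining relations of the path algebra: vertices are orthogonal idempotents,
`s(e)·e = e`, `e·r(e) = e`, and all other vertex-edge products vanish. -/
inductive PathRel : FreeAlgebra K E.Gen → FreeAlgebra K E.Gen → Prop
  | vv_eq (u : E.V) :
      PathRel (FreeAlgebra.ι K (Sum.inl u) * FreeAlgebra.ι K (Sum.inl u))
        (FreeAlgebra.ι K (Sum.inl u))
  | vv_ne (u v : E.V) : u ≠ v →
      PathRel (FreeAlgebra.ι K (Sum.inl u) * FreeAlgebra.ι K (Sum.inl v)) 0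
  | ve_eq (e : E.Edge) :
      PathRel (FreeAlgebra.ι K (Sum.inl (E.s e)) * FreeAlgebra.ι K (Sum.inr e))
        (FreeAlgebra.ι K (Sum.inr e))
  | ve_ne (u : E.V) (e : E.Edge) : E.s e ≠ u →
      PathRel (FreeAlgebra.ι K (Sum.inl u) * FreeAlgebra.ι K (Sum.inr e)) 0
  | ev_eq (e : E.Edge) :
      PathRel (FreeAlgebra.ι K (Sum.inr e) * FreeAlgebra.ι K (Sum.inl (E.r e)))
        (FreeAlgebra.ι K (Sum.inr e))
  | ev_ne (e : E.Edge) (u : E.V) : E.r e ≠ u →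
      PathRel (FreeAlgebra.ι K (Sum.inr e) * FreeAlgebra.ι K (Sum.inl u)) 0

/-- The ambient unital algebra (the unitalization of the path algebra). -/
abbrev PA : Type := RingQuot (E.PathRel K)

/-- The image of a vertex in the path algebra. -/
noncomputable def vtx (u : E.V) : E.PA K :=
  RingQuot.mkAlgHom K (E.PathRel K) (FreeAlgebra.ι K (Sum.inl u))

/-- The image of an edge in the path algebra. -/
noncomputable def edg (e : E.Edge) : E.PA K :=
  RingQuot.mkAlgHom K (E.PathRel K) (FreeAlgebra.ι K (Sum.inr e))

/-- The path algebra `KE`: the (non-unital) subalgebra spanned by all paths, i.e.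
generated by the vertices and edges. -/
noncomputable def KE : NonUnitalSubalgebra K (E.PA K) :=
  NonUnitalAlgebra.adjoin K (Set.range (E.vtx K) ∪ Set.range (E.edg K))

/-- The center `Z(KE)` of the path algebra. -/
def relCenter : Set (E.PA K) :=
  {z | z ∈ E.KE K ∧ ∀ a ∈ E.KE K, a * z = z * a}

/-- `E.IsPathFrom u v l` : the list of edges `l` is a path from `u` to `v`
(`l = []` is the trivial path at `u = v`). -/
def IsPathFrom : E.V → E.V → List E.Edge → Prop
  | u, v, [] => u = v
  | u, v, e :: l => E.s e = u ∧ IsPathFrom (E.r e) v l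

/-- The element of the path algebra corresponding to the path starting at `u`
with list of edges `l` (for `l = []` this is the vertex `u` itself). -/
noncomputable def pathElem (u : E.V) (l : List E.Edge) : E.PA K :=
  E.vtx K u * (l.map (E.edg K)).prod

/-- The sum of all vertices: the unit of `KE` when `E⁰` is finite. -/
noncomputable def unitKE : E.PA K := ∑ᶠ u : E.V, E.vtx K u

/-- The scalar multiples `K·1` of the unit of `KE`. -/
noncomputable def scalarSet : Set (E.PA K) := Set.range fun k : K => k • E.unitKE K

/-- One step in the underlying undirected graph. -/
def Step (u v : E.V) : Prop :=
  (∃ e : E.Edge, E.s e = u ∧ E.r e = v) ∨ (∃ e : E.Edge, E.s e = v ∧ E.r e = u)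

/-- `u ∼ v` : the vertices `u` and `v` are connected in the underlying undirected graph. -/
def Connected (u v : E.V) : Prop := Relation.ReflTransGen E.Step u v

/-- The graph `E` is connected. -/
def IsConnectedGraph : Prop := ∀ u v : E.V, E.Connected u v

/-- The graph `E` is a cycle: `n ≥ 1` vertices `u₁, …, uₙ` and `n` edges `f₁, …, fₙ` with
`s(fᵢ) = uᵢ`, `r(fᵢ) = uᵢ₊₁` (indices mod `n`). -/
def IsCycleGraph : Prop :=
  ∃ n : ℕ, ∃ hn : 0 < n, ∃ (hv : Fin n ≃ E.V) (he : Fin n ≃ E.Edge),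
    ∀ i : Fin n, E.s (he i) = hv i ∧ E.r (he i) = hv ⟨(i.1 + 1) % n, Nat.mod_lt _ hn⟩

end DirGraph

namespace DirGraph

/-- The extended graph `Ê`: same vertices, edges `E¹ ⊕ (E¹)*`, where the ghost edge `e*`
(second component) has `s(e*) = r(e)` and `r(e*) = s(e)`. -/
def ext (E : DirGraph) : DirGraph where
  V := E.V
  Edge := E.Edge ⊕ E.Edge
  s := Sum.elim E.s E.r
  r := Sum.elim E.r E.s

variable (K : Type) [Field K] (E : DirGraph)

/-- Defining relations of the Cohn (`t = false`) and Leavitt (`t = true`) path algebras: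
the path-algebra relations of the extended graph, the relations (CK1)
`e*e' = δ_{e,e'} r(e)`, and — only for `t = true` — the relations (CK2)
`v = Σ_{s(e)=v} ee*` at every regular vertex `v`. -/
inductive CLRel : Bool → FreeAlgebra K E.ext.Gen → FreeAlgebra K E.ext.Gen → Prop
  | base (t : Bool) {a b : FreeAlgebra K E.ext.Gen} : E.ext.PathRel K a b → CLRel t a b
  | ck1_eq (t : Bool) (e : E.Edge) :
      CLRel t (FreeAlgebra.ι K (Sum.inr (Sum.inr e)) * FreeAlgebra.ι K (Sum.inr (Sum.inl e)))
        (FreeAlgebra.ι K (Sum.inl (E.r e)))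
  | ck1_ne (t : Bool) (e f : E.Edge) : e ≠ f →
      CLRel t (FreeAlgebra.ι K (Sum.inr (Sum.inr e)) * FreeAlgebra.ι K (Sum.inr (Sum.inl f))) 0
  | ck2 (v : E.V) (h : {e : E.Edge | E.s e = v}.Finite)
      (hne : {e : E.Edge | E.s e = v}.Nonempty) :
      CLRel true (FreeAlgebra.ι K (Sum.inl v))
        (h.toFinset.sum fun e =>
          FreeAlgebra.ι K (Sum.inr (Sum.inl e)) * FreeAlgebra.ι K (Sum.inr (Sum.inr e)))

/-- The ambient unital algebra containing the Cohn (`t = false`) or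
Leavitt (`t = true`) path algebra. -/
abbrev CL (t : Bool) : Type := RingQuot (E.CLRel K t)

/-- The image of a vertex in `C_K(E)` / `L_K(E)`. -/
noncomputable def clvtx (t : Bool) (u : E.V) : E.CL K t :=
  RingQuot.mkAlgHom K (E.CLRel K t) (FreeAlgebra.ι K (Sum.inl u))

/-- The image of a (real) edge in `C_K(E)` / `L_K(E)`. -/
noncomputable def cledg (t : Bool) (e : E.Edge) : E.CL K t :=
  RingQuot.mkAlgHom K (E.CLRel K t) (FreeAlgebra.ι K (Sum.inr (Sum.inl e)))

/-- The image of a ghost edge `e*` in `C_K(E)` / `L_K(E)`. -/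
noncomputable def clghost (t : Bool) (e : E.Edge) : E.CL K t :=
  RingQuot.mkAlgHom K (E.CLRel K t) (FreeAlgebra.ι K (Sum.inr (Sum.inr e)))

/-- The Cohn path algebra `C_K(E)` (`t = false`) or Leavitt path algebra `L_K(E)`
(`t = true`): the non-unital subalgebra generated by vertices, edges, and ghost edges. -/
noncomputable def clSub (t : Bool) : NonUnitalSubalgebra K (E.CL K t) :=
  NonUnitalAlgebra.adjoin K
    (Set.range (E.clvtx K t) ∪ Set.range (E.cledg K t) ∪ Set.range (E.clghost K t))

/-- The center of `C_K(E)` (`t = false`) or of `L_K(E)` (`t = true`). -/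
def clCenter (t : Bool) : Set (E.CL K t) :=
  {z | z ∈ E.clSub K t ∧ ∀ a ∈ E.clSub K t, a * z = z * a}

/-- The element `μ` of `C_K(E)` / `L_K(E)` for the path `μ` starting at `u` with edges `l`. -/
noncomputable def clPath (t : Bool) (u : E.V) (l : List E.Edge) : E.CL K t :=
  E.clvtx K t u * (l.map (E.cledg K t)).prod

/-- The element `μ*` of `C_K(E)` / `L_K(E)` for the path `μ` starting at `u` with edges `l`. -/
noncomputable def clPathStar (t : Bool) (u : E.V) (l : List E.Edge) : E.CL K t :=
  ((l.map (E.clghost K t)).reverse).prod * E.clvtx K t u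

/-- The sum of all vertices: the unit of `C_K(E)` / `L_K(E)` when `E⁰` is finite. -/
noncomputable def clOne (t : Bool) : E.CL K t := ∑ᶠ u : E.V, E.clvtx K t u

/-- The degree-zero component (w.r.t. the canonical ℤ-grading) of `C_K(E)` / `L_K(E)`:
the span of the elements `στ*` with `σ, τ` paths of equal length and common range. -/
def clDeg0 (t : Bool) : Submodule K (E.CL K t) :=
  Submodule.span K {x : E.CL K t | ∃ (u w v : E.V) (l m : List E.Edge),
    E.IsPathFrom u v l ∧ E.IsPathFrom w v m ∧ l.length = m.length ∧
    x = E.clPath K t u l * E.clPathStar K t w m}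

/-- The span of the symmetric elements `μμ*`, `μ` a path of `E`. -/
def clSymmSpan (t : Bool) : Submodule K (E.CL K t) :=
  Submodule.span K {x : E.CL K t | ∃ (u v : E.V) (l : List E.Edge),
    E.IsPathFrom u v l ∧ x = E.clPath K t u l * E.clPathStar K t u l}

/-- A subset `H ⊆ E⁰` is hereditary if paths starting in `H` end in `H`. -/
def Hereditary (H : Set E.V) : Prop :=
  ∀ (u v : E.V) (l : List E.Edge), E.IsPathFrom u v l → u ∈ H → v ∈ H

/-- The two-sided ideal of `C_K(E)` / `L_K(E)` generated by a subset `S₀`. -/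
def clIdealGen (t : Bool) (S₀ : Set (E.CL K t)) : Set (E.CL K t) :=
  ⋂₀ {J : Set (E.CL K t) | IsIdealOf K (E.clSub K t : Set (E.CL K t)) J ∧ S₀ ⊆ J}

/-- `c` is a cycle based at `u`: a nontrivial closed path visiting no vertex twice. -/
def IsCycle (u : E.V) (l : List E.Edge) : Prop :=
  l ≠ [] ∧ E.IsPathFrom u u l ∧ (l.map E.s).Nodup

/-- The (closed) path `l` has an exit. -/
def HasExit (l : List E.Edge) : Prop :=
  ∃ f : E.Edge, ∃ e ∈ l, E.s f = E.s e ∧ f ≠ e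

/-- Condition (L): every cycle of `E` has an exit. -/
def CondL : Prop := ∀ (u : E.V) (l : List E.Edge), E.IsCycle u l → E.HasExit l

/-- The set of paths (given by their source and list of edges) that end at a vertex of the
cycle `c` and do not contain all the edges of `c`. -/
def endsAtNotContaining (c : List E.Edge) : Set (E.V × List E.Edge) :=
  {p | (∃ v : E.V, (∃ e ∈ c, E.s e = v) ∧ E.IsPathFrom p.1 v p.2) ∧ ∃ e ∈ c, e ∉ p.2}

/-- `c` is the unique cycle of `E` without exits (uniqueness as a cycle: any cycle
without exits has the same edges as `c`). -/
def UniqueNoExitCycle (c : List E.Edge) : Prop :=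
  (∃ u : E.V, E.IsCycle u c ∧ ¬ E.HasExit c) ∧
    ∀ (u' : E.V) (c' : List E.Edge), E.IsCycle u' c' → ¬ E.HasExit c' →
      ∀ e : E.Edge, e ∈ c' ↔ e ∈ c

end DirGraph

namespace DirGraph

variable (K : Type) [Field K] (E : DirGraph) (t : Bool)

lemma clrel {a b : FreeAlgebra K E.ext.Gen} (h : E.CLRel K t a b) :
    RingQuot.mkAlgHom K (E.CLRel K t) a = RingQuot.mkAlgHom K (E.CLRel K t) b :=
  RingQuot.mkAlgHom_rel K h

variable {E t}

lemma clvtx_mul_self (u : E.V) : E.clvtx K t u * E.clvtx K t u = E.clvtx K t u := by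
  rw [clvtx, ← map_mul]
  exact clrel K E t (CLRel.base t (PathRel.vv_eq (E := E.ext) u))

lemma clvtx_mul_clvtx_ne {u v : E.V} (h : u ≠ v) :
    E.clvtx K t u * E.clvtx K t v = 0 := by
  rw [clvtx, clvtx, ← map_mul]
  rw [clrel K E t (CLRel.base t (PathRel.vv_ne (E := E.ext) u v h)), map_zero]

lemma clvtx_mul_cledg (e : E.Edge) :
    E.clvtx K t (E.s e) * E.cledg K t e = E.cledg K t e := by
  rw [clvtx, cledg, ← map_mul]
  exact clrel K E t (CLRel.base t (PathRel.ve_eq (E := E.ext) (Sum.inl e)))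

lemma clvtx_mul_cledg_ne {u : E.V} (e : E.Edge) (h : E.s e ≠ u) :
    E.clvtx K t u * E.cledg K t e = 0 := by
  rw [clvtx, cledg, ← map_mul]
  rw [clrel K E t (CLRel.base t (PathRel.ve_ne (E := E.ext) u (Sum.inl e) h)), map_zero]

lemma cledg_mul_clvtx (e : E.Edge) :
    E.cledg K t e * E.clvtx K t (E.r e) = E.cledg K t e := by
  rw [clvtx, cledg, ← map_mul]
  exact clrel K E t (CLRel.base t (PathRel.ev_eq (E := E.ext) (Sum.inl e)))

lemma clvtx_mul_clghost (e : E.Edge) :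
    E.clvtx K t (E.r e) * E.clghost K t e = E.clghost K t e := by
  rw [clvtx, clghost, ← map_mul]
  exact clrel K E t (CLRel.base t (PathRel.ve_eq (E := E.ext) (Sum.inr e)))

lemma clvtx_mul_clghost_ne {u : E.V} (e : E.Edge) (h : E.r e ≠ u) :
    E.clvtx K t u * E.clghost K t e = 0 := by
  rw [clvtx, clghost, ← map_mul]
  rw [clrel K E t (CLRel.base t (PathRel.ve_ne (E := E.ext) u (Sum.inr e) h)), map_zero]

lemma clghost_mul_clvtx (e : E.Edge) :
    E.clghost K t e * E.clvtx K t (E.s e) = E.clghost K t e := by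
  rw [clvtx, clghost, ← map_mul]
  exact clrel K E t (CLRel.base t (PathRel.ev_eq (E := E.ext) (Sum.inr e)))

lemma clghost_mul_clvtx_ne {u : E.V} (e : E.Edge) (h : E.s e ≠ u) :
    E.clghost K t e * E.clvtx K t u = 0 := by
  rw [clvtx, clghost, ← map_mul]
  rw [clrel K E t (CLRel.base t (PathRel.ev_ne (E := E.ext) (Sum.inr e) u h)), map_zero]

lemma clghost_mul_cledg_eq (e : E.Edge) :
    E.clghost K t e * E.cledg K t e = E.clvtx K t (E.r e) := by
  rw [clvtx, clghost, cledg, ← map_mul]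
  exact clrel K E t (CLRel.ck1_eq t e)

lemma clghost_mul_cledg_ne {e f : E.Edge} (h : e ≠ f) :
    E.clghost K t e * E.cledg K t f = 0 := by
  rw [clghost, cledg, ← map_mul]
  exact (clrel K E t (CLRel.ck1_ne t e f h)).trans (map_zero _)

end DirGraph

namespace DirGraph

variable (K : Type) [Field K] {E : DirGraph} {t : Bool}

@[simp] lemma clPath_nil (u : E.V) : E.clPath K t u [] = E.clvtx K t u := by
  simp [clPath]

@[simp] lemma clPathStar_nil (u : E.V) : E.clPathStar K t u [] = E.clvtx K t u := by
  simp [clPathStar]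

lemma clPath_cons {u v : E.V} {e : E.Edge} {l : List E.Edge}
    (hp : E.IsPathFrom u v (e :: l)) :
    E.clPath K t u (e :: l) = E.cledg K t e * E.clPath K t (E.r e) l := by
  obtain ⟨he, hl⟩ := hp
  subst he
  cases l with
  | nil => simp [clPath, cledg_mul_clvtx, clvtx_mul_cledg]
  | cons f l' =>
      obtain ⟨hf, -⟩ := hl
      simp only [clPath, List.map_cons, List.prod_cons, ← mul_assoc,
        clvtx_mul_cledg]
      rw [mul_assoc (E.cledg K t e) (E.clvtx K t (E.r e)) (E.cledg K t f), ← hf,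
        clvtx_mul_cledg]

lemma clPathStar_cons {u : E.V} {e : E.Edge} {l : List E.Edge}
    (he : E.s e = u) :
    E.clPathStar K t u (e :: l) = E.clPathStar K t (E.r e) l * E.clghost K t e := by
  subst he
  simp only [clPathStar, List.map_cons, List.reverse_cons, List.prod_append,
    List.prod_cons, List.prod_nil, mul_one, mul_assoc]
  rw [clghost_mul_clvtx, clvtx_mul_clghost]

lemma clvtx_mul_clPath (w : E.V) (l : List E.Edge) :
    E.clvtx K t w * E.clPath K t w l = E.clPath K t w l := by
  rw [clPath, ← mul_assoc, clvtx_mul_self]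

lemma clvtx_mul_clPath_ne {w' w : E.V} (h : w' ≠ w) (l : List E.Edge) :
    E.clvtx K t w' * E.clPath K t w l = 0 := by
  rw [clPath, ← mul_assoc, clvtx_mul_clvtx_ne K h, zero_mul]

lemma clPathStar_mul_clvtx (w : E.V) (l : List E.Edge) :
    E.clPathStar K t w l * E.clvtx K t w = E.clPathStar K t w l := by
  rw [clPathStar, mul_assoc, clvtx_mul_self]

lemma clPathStar_mul_clvtx_ne {w w' : E.V} (h : w ≠ w') (l : List E.Edge) :
    E.clPathStar K t w l * E.clvtx K t w' = 0 := by
  rw [clPathStar, mul_assoc, clvtx_mul_clvtx_ne K h, mul_zero]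

lemma pathFrom_end_unique {E : DirGraph} :
    ∀ (m : List E.Edge) (w v₁ v₂ : E.V),
      E.IsPathFrom w v₁ m → E.IsPathFrom w v₂ m → v₁ = v₂ := by
  intro m
  induction m with
  | nil => intro w v₁ v₂ h₁ h₂; exact h₁.symm.trans h₂
  | cons e m' ih => intro w v₁ v₂ h₁ h₂; exact ih (E.r e) v₁ v₂ h₁.2 h₂.2

lemma isPathFrom_append {E : DirGraph} {v : E.V} {b : List E.Edge} :
    ∀ (a : List E.Edge) (u : E.V), E.IsPathFrom u v (a ++ b) →
      ∃ w, E.IsPathFrom u w a ∧ E.IsPathFrom w v b := by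
  intro a
  induction a with
  | nil => intro u h; exact ⟨u, rfl, h⟩
  | cons e a' ih =>
      intro u h
      obtain ⟨w, h1, h2⟩ := ih (E.r e) h.2
      exact ⟨w, ⟨h.1, h1⟩, h2⟩

lemma isPathFrom_take_drop {E : DirGraph} {u v : E.V} {l : List E.Edge}
    (h : E.IsPathFrom u v l) (k : ℕ) :
    ∃ w, E.IsPathFrom u w (l.take k) ∧ E.IsPathFrom w v (l.drop k) := by
  apply isPathFrom_append
  rw [List.take_append_drop]
  exact h

lemma star_mul_path_self {E : DirGraph} {t : Bool} :
    ∀ (m : List E.Edge) (w v : E.V), E.IsPathFrom w v m →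
      E.clPathStar K t w m * E.clPath K t w m = E.clvtx K t v := by
  intro m
  induction m with
  | nil =>
      intro w v h
      cases h
      simp [clvtx_mul_self]
  | cons e m' ih =>
      intro w v h
      rw [clPath_cons K h, clPathStar_cons K h.1, mul_assoc,
        ← mul_assoc (E.clghost K t e), clghost_mul_cledg_eq, clvtx_mul_clPath]
      exact ih (E.r e) v h.2

end DirGraph

namespace DirGraph

variable (K : Type) [Field K] {E : DirGraph} {t : Bool}

lemma key_star_mul_path :
    ∀ (m : List E.Edge) (w vm vl : E.V) (l : List E.Edge),
      E.IsPathFrom w vm m → E.IsPathFrom w vl l →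
      (m.length ≤ l.length ∧ l.take m.length = m ∧
        E.clPathStar K t w m * E.clPath K t w l =
          E.clPath K t vm (l.drop m.length)) ∨
      (l.length ≤ m.length ∧ m.take l.length = l ∧
        E.clPathStar K t w m * E.clPath K t w l =
          E.clPathStar K t vl (m.drop l.length)) ∨
      E.clPathStar K t w m * E.clPath K t w l = 0 := by
  intro m
  induction m with
  | nil =>
      intro w vm vl l hm hl
      cases hm
      left
      refine ⟨Nat.zero_le _, rfl, ?_⟩
      simp [clvtx_mul_clPath]
  | cons e m' ih =>
      intro w vm vl l hm hl
      cases l with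
      | nil =>
          cases hl
          right; left
          refine ⟨Nat.zero_le _, rfl, ?_⟩
          simp [clPathStar_mul_clvtx]
      | cons f l' =>
          have hLHS : E.clPathStar K t w (e :: m') * E.clPath K t w (f :: l') =
              E.clPathStar K t (E.r e) m' *
                (E.clghost K t e * E.cledg K t f) * E.clPath K t (E.r f) l' := by
            rw [clPath_cons K hl, clPathStar_cons K hm.1]
            rw [mul_assoc, mul_assoc, mul_assoc]
          by_cases hef : e = f
          · subst hef
            rw [hLHS, clghost_mul_cledg_eq, mul_assoc, clvtx_mul_clPath] at *
            rcases ih (E.r e) vm vl l' hm.2 hl.2 with ⟨h1, h2, h3⟩ | ⟨h1, h2, h3⟩ | h3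
            · left
              refine ⟨Nat.succ_le_succ h1, ?_, ?_⟩
              · simpa [List.take_succ_cons] using congrArg (List.cons e) h2
              · simpa [List.drop_succ_cons] using h3
            · right; left
              refine ⟨Nat.succ_le_succ h1, ?_, ?_⟩
              · simpa [List.take_succ_cons] using congrArg (List.cons e) h2
              · simpa [List.drop_succ_cons] using h3
            · right; right; exact h3
          · right; right
            rw [hLHS, clghost_mul_cledg_ne K hef, mul_zero, zero_mul]

end DirGraph

namespace DirGraph

variable (K : Type) [Field K] {E : DirGraph} {t : Bool}

lemma clvtx_mem (u : E.V) : E.clvtx K t u ∈ E.clSub K t :=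
  NonUnitalAlgebra.subset_adjoin K (Or.inl (Or.inl ⟨u, rfl⟩))

lemma cledg_mem (e : E.Edge) : E.cledg K t e ∈ E.clSub K t :=
  NonUnitalAlgebra.subset_adjoin K (Or.inl (Or.inr ⟨e, rfl⟩))

lemma clghost_mem (e : E.Edge) : E.clghost K t e ∈ E.clSub K t :=
  NonUnitalAlgebra.subset_adjoin K (Or.inr ⟨e, rfl⟩)

lemma clPath_mem (u : E.V) (l : List E.Edge) : E.clPath K t u l ∈ E.clSub K t := by
  suffices h : ∀ (l : List E.Edge) (a : E.CL K t), a ∈ E.clSub K t →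
      a * (l.map (E.cledg K t)).prod ∈ E.clSub K t from h l _ (clvtx_mem K u)
  intro l
  induction l with
  | nil => intro a ha; simpa using ha
  | cons e l' ih =>
      intro a ha
      simp only [List.map_cons, List.prod_cons, ← mul_assoc]
      exact ih _ (mul_mem ha (cledg_mem K e))

lemma clPathStar_mem (u : E.V) (l : List E.Edge) :
    E.clPathStar K t u l ∈ E.clSub K t := by
  suffices h : ∀ (l : List E.Edge) (a : E.CL K t), a ∈ E.clSub K t →
      ((l.map (E.clghost K t)).reverse).prod * a ∈ E.clSub K t from
    h l _ (clvtx_mem K u)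
  intro l
  induction l with
  | nil => intro a ha; simpa using ha
  | cons e l' ih =>
      intro a ha
      simp only [List.map_cons, List.reverse_cons, List.prod_append,
        List.prod_cons, List.prod_nil, mul_one, mul_assoc]
      exact ih _ (mul_mem (clghost_mem K e) ha)

/-- The linear map `x ↦ c* x c`. -/
noncomputable def Tmap (u : E.V) (l : List E.Edge) : E.CL K t →ₗ[K] E.CL K t :=
  (LinearMap.mulLeft K (E.clPathStar K t u l)).comp
    (LinearMap.mulRight K (E.clPath K t u l))

lemma Tmap_apply (u : E.V) (l : List E.Edge) (x : E.CL K t) :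
    Tmap K u l x = E.clPathStar K t u l * x * E.clPath K t u l := by
  simp [Tmap, mul_assoc]

lemma Tpow_apply (u : E.V) (l : List E.Edge) (N : ℕ) (x : E.CL K t) :
    (Tmap K u l ^ (N + 1)) x = (Tmap K u l ^ N) (Tmap K u l x) := by
  rw [pow_succ]; rfl

lemma Tpow_vtx {u : E.V} {l : List E.Edge} (hpath : E.IsPathFrom u u l) (N : ℕ) :
    (Tmap K u l ^ N) (E.clvtx K t u) = E.clvtx K t u := by
  induction N with
  | zero => simp
  | succ N ih =>
      rw [Tpow_apply, Tmap_apply, clPathStar_mul_clvtx,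
        star_mul_path_self K l u u hpath, ih]

lemma core {u : E.V} {l : List E.Edge} (hl : l ≠ []) (hpath : E.IsPathFrom u u l) :
    ∀ N : ℕ, ∀ v : E.V, ∀ σ τ : List E.Edge,
      E.IsPathFrom u v σ → E.IsPathFrom u v τ → σ.length = τ.length →
      σ.length ≤ N →
      ∃ k : K, (Tmap K u l ^ N) (E.clPath K t u σ * E.clPathStar K t u τ) =
        k • E.clvtx K t u := by
  have hn : 0 < l.length := List.length_pos_iff.mpr hl
  intro N
  induction N using Nat.strong_induction_on with
  | _ N IH =>
  intro v σ τ hσ hτ hlen hle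
  rcases Nat.eq_zero_or_pos σ.length with h0 | hpos
  · -- σ = τ = []
    have hσ0 : σ = [] := List.length_eq_zero_iff.mp h0
    have hτ0 : τ = [] := List.length_eq_zero_iff.mp (hlen ▸ h0)
    subst hσ0; subst hτ0
    cases hσ
    refine ⟨1, ?_⟩
    rw [clPath_nil, clPathStar_nil, clvtx_mul_self, Tpow_vtx K hpath, one_smul]
  · obtain ⟨N', rfl⟩ : ∃ N', N = N' + 1 := ⟨N - 1, by omega⟩
    rw [Tpow_apply, Tmap_apply]
    have hx : E.clPathStar K t u l * (E.clPath K t u σ * E.clPathStar K t u τ) *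
        E.clPath K t u l =
        (E.clPathStar K t u l * E.clPath K t u σ) *
          (E.clPathStar K t u τ * E.clPath K t u l) := by
      rw [mul_assoc, mul_assoc, mul_assoc]
    rw [hx]
    rcases key_star_mul_path K l u u v σ hpath hσ with ⟨h1, h2, h3⟩ | ⟨h1, h2, h3⟩ | h3
    · -- l.length ≤ σ.length, σ.take n = l, A = clPath u (σ.drop n)
      rcases key_star_mul_path K τ u v u l hτ hpath with
        ⟨g1, g2, g3⟩ | ⟨g1, g2, g3⟩ | g3
      · -- τ.length ≤ l.length : forces all lengths equal to n
        have hnτ : τ.length = l.length := le_antisymm g1 (hlen ▸ h1)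
        have hσl : σ = l := by
          have : σ.take σ.length = l := by rw [← h2]; congr 1; omega
          simpa using this
        have hvu : v = u := pathFrom_end_unique σ u v u hσ (hσl ▸ hpath)
        refine ⟨1, ?_⟩
        rw [h3, g3]
        have d1 : σ.drop l.length = [] := by
          apply List.drop_eq_nil_of_le; omega
        have d2 : l.drop τ.length = [] := by
          apply List.drop_eq_nil_of_le; omega
        rw [d1, d2, clPath_nil, clPath_nil, hvu, clvtx_mul_self,
          Tpow_vtx K hpath, one_smul]
      · -- l.length ≤ τ.length, τ.take n = l, B = clPathStar u (τ.drop n)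
        rw [h3, g3]
        obtain ⟨w₁, hw1, hw2⟩ := isPathFrom_take_drop hσ l.length
        rw [h2] at hw1
        have e1 : w₁ = u := pathFrom_end_unique l u w₁ u hw1 hpath
        rw [e1] at hw2
        obtain ⟨w₂, hv1, hv2⟩ := isPathFrom_take_drop hτ l.length
        rw [g2] at hv1
        have e2 : w₂ = u := pathFrom_end_unique l u w₂ u hv1 hpath
        rw [e2] at hv2
        refine IH N' (Nat.lt_succ_self N') v _ _ hw2 hv2 ?_ ?_
        · simp [List.length_drop, hlen]
        · simp only [List.length_drop]; omega
      · rw [g3, mul_zero]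
        exact ⟨0, by rw [map_zero, zero_smul]⟩
    · -- σ.length ≤ l.length, l.take σ.length = σ, A = clPathStar v (l.drop σ.length)
      rcases key_star_mul_path K τ u v u l hτ hpath with
        ⟨g1, g2, g3⟩ | ⟨g1, g2, g3⟩ | g3
      · -- τ.length ≤ l.length, l.take τ.length = τ, B = clPath v (l.drop τ.length)
        obtain ⟨w₁, hw1, hw2⟩ := isPathFrom_take_drop hpath σ.length
        rw [h2] at hw1
        have hwv : w₁ = v := pathFrom_end_unique σ u w₁ v hw1 hσ
        refine ⟨1, ?_⟩
        rw [h3, g3, ← hlen, ← hwv]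
        rw [star_mul_path_self K _ w₁ u hw2]
        rw [Tpow_vtx K hpath, one_smul]
      · -- l.length ≤ τ.length and σ.length ≤ l.length : all equal
        have hnτ : τ.length = l.length := le_antisymm (hlen ▸ h1) g1
        have hτl : τ = l := by
          rw [← g2, ← hnτ, List.take_length]
        have hσl : σ = l := by
          have := h2
          rw [hlen, hnτ, List.take_length] at this
          exact this.symm
        have hvu : v = u := pathFrom_end_unique σ u v u hσ (hσl ▸ hpath)
        refine ⟨1, ?_⟩
        rw [h3, g3]
        have d1 : l.drop σ.length = [] := by
          apply List.drop_eq_nil_of_le; omega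
        have d2 : τ.drop l.length = [] := by
          apply List.drop_eq_nil_of_le; omega
        rw [d1, d2, clPathStar_nil, clPathStar_nil, hvu, clvtx_mul_self,
          Tpow_vtx K hpath, one_smul]
      · rw [g3, mul_zero]
        exact ⟨0, by rw [map_zero, zero_smul]⟩
    · rw [h3, zero_mul]
      exact ⟨0, by rw [map_zero, zero_smul]⟩

end DirGraph

open DirGraph


/-- Let `A = C_K(E)` (`t = false`) or `L_K(E)` (`t = true`) and let
`c` be a (nontrivial) closed path based at `u`.  Any degree-zero fixed point `ω ∈ uAu` of
`T_c : x ↦ c*xc` lies in `Ku`.  Consequently, if `z` is a degree-zero central element and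
there is a closed path based at `u`, then the Peirce component `z_u = z·u` lies in `Ku`. -/
theorem stmt17 (K : Type) [Field K] (E : DirGraph) (t : Bool)
    (u : E.V) (l : List E.Edge) (hl : l ≠ []) (hpath : E.IsPathFrom u u l) :
    (∀ ω ∈ E.clSub K t, ω ∈ E.clDeg0 K t →
        E.clvtx K t u * ω * E.clvtx K t u = ω →
        E.clPathStar K t u l * ω * E.clPath K t u l = ω →
        ∃ k : K, ω = k • E.clvtx K t u) ∧
    (∀ z ∈ E.clCenter K t, z ∈ E.clDeg0 K t →
        ∃ k : K, z * E.clvtx K t u = k • E.clvtx K t u) := by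
  have hp : ∀ x ∈ E.clDeg0 K t, ∃ N₀ : ℕ, ∀ N ≥ N₀, ∃ k : K,
      (Tmap K u l ^ N) (E.clvtx K t u * x * E.clvtx K t u) = k • E.clvtx K t u := by
    intro x hx
    induction hx using Submodule.span_induction with
    | mem x hx =>
        obtain ⟨u', w, v, σ, τ, hσ, hτ, hlen, rfl⟩ := hx
        by_cases hu' : u' = u
        · rw [hu'] at hσ ⊢
          by_cases hw : w = u
          · rw [hw] at hτ ⊢
            refine ⟨σ.length, fun N hN => ?_⟩
            rw [← mul_assoc, mul_assoc (E.clvtx K t u * E.clPath K t u σ),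
              clPathStar_mul_clvtx, clvtx_mul_clPath]
            exact core K hl hpath N v σ τ hσ hτ hlen hN
          · refine ⟨0, fun N _ => ⟨0, ?_⟩⟩
            rw [mul_assoc, mul_assoc, clPathStar_mul_clvtx_ne K hw, mul_zero,
              mul_zero, map_zero, zero_smul]
        · refine ⟨0, fun N _ => ⟨0, ?_⟩⟩
          rw [← mul_assoc, clvtx_mul_clPath_ne K (fun h => hu' h.symm),
            zero_mul, zero_mul, map_zero, zero_smul]
    | zero => exact ⟨0, fun N _ => ⟨0, by simp⟩⟩
    | add x y hx hy ihx ihy =>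
        obtain ⟨N₁, h₁⟩ := ihx
        obtain ⟨N₂, h₂⟩ := ihy
        refine ⟨max N₁ N₂, fun N hN => ?_⟩
        obtain ⟨k₁, hk₁⟩ := h₁ N (le_trans (le_max_left _ _) hN)
        obtain ⟨k₂, hk₂⟩ := h₂ N (le_trans (le_max_right _ _) hN)
        refine ⟨k₁ + k₂, ?_⟩
        rw [mul_add, add_mul, map_add, hk₁, hk₂, add_smul]
    | smul a x hx ih =>
        obtain ⟨N₀, h₀⟩ := ih
        refine ⟨N₀, fun N hN => ?_⟩
        obtain ⟨k, hk⟩ := h₀ N hN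
        refine ⟨a * k, ?_⟩
        rw [mul_smul_comm, smul_mul_assoc, map_smul, hk, smul_smul]
  have main : ∀ ω ∈ E.clSub K t, ω ∈ E.clDeg0 K t →
      E.clvtx K t u * ω * E.clvtx K t u = ω →
      E.clPathStar K t u l * ω * E.clPath K t u l = ω →
      ∃ k : K, ω = k • E.clvtx K t u := by
    intro ω hωsub hωdeg hωu hωfix
    have hTω : Tmap K u l ω = ω := by rw [Tmap_apply]; exact hωfix
    have hTN : ∀ N : ℕ, (Tmap K u l ^ N) ω = ω := by
      intro N
      induction N with
      | zero => simp
      | succ N ih => rw [Tpow_apply, hTω, ih]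
    obtain ⟨N₀, h⟩ := hp ω hωdeg
    obtain ⟨k, hk⟩ := h N₀ le_rfl
    rw [hωu, hTN N₀] at hk
    exact ⟨k, hk⟩
  have hmul : ∀ x ∈ E.clDeg0 K t, x * E.clvtx K t u ∈ E.clDeg0 K t := by
    intro x hx
    induction hx using Submodule.span_induction with
    | mem x hx =>
        obtain ⟨u', w, v, σ, τ, hσ, hτ, hlen, rfl⟩ := hx
        by_cases hw : w = u
        · rw [mul_assoc, hw, clPathStar_mul_clvtx]
          exact Submodule.subset_span ⟨u', u, v, σ, τ, hσ, hw ▸ hτ, hlen, rfl⟩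
        · rw [mul_assoc, clPathStar_mul_clvtx_ne K hw, mul_zero]
          exact zero_mem _
    | zero => rw [zero_mul]; exact zero_mem _
    | add x y hx hy ihx ihy => rw [add_mul]; exact add_mem ihx ihy
    | smul a x hx ih => rw [smul_mul_assoc]; exact Submodule.smul_mem _ _ ih
  refine ⟨main, ?_⟩
  intro z hz hzdeg
  obtain ⟨hzsub, hzcomm⟩ := hz
  have hmem : z * E.clvtx K t u ∈ E.clSub K t :=
    mul_mem hzsub (clvtx_mem K u)
  have hdeg : z * E.clvtx K t u ∈ E.clDeg0 K t := hmul z hzdeg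
  have hzz : E.clvtx K t u * z = z * E.clvtx K t u := hzcomm _ (clvtx_mem K u)
  have hωu : E.clvtx K t u * (z * E.clvtx K t u) * E.clvtx K t u
      = z * E.clvtx K t u := by
    rw [← mul_assoc, hzz, mul_assoc, clvtx_mul_self, mul_assoc, clvtx_mul_self]
  have hzs : E.clPathStar K t u l * z = z * E.clPathStar K t u l :=
    hzcomm _ (clPathStar_mem K u l)
  have hfix : E.clPathStar K t u l * (z * E.clvtx K t u) * E.clPath K t u l
      = z * E.clvtx K t u := by
    rw [← mul_assoc, hzs, mul_assoc, clvtx_mul_clPath, mul_assoc,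
      star_mul_path_self K l u u hpath]
  exact main _ hmem hdeg hωu hfix
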